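/- Let T be a binary dimension tree on D = {1,…,d}, and for a tensor a ∈ ℝ^{N₁×⋯×N_d} let M^{(α)}(a) denote the matricization of a with respect to the index subset α ⊂ D. Then for any non-leaf node α with children α_l, α_r (α = α_l ∪ α_r disjointly), range(M^{(α)}(a)) ⊆ range(M^{(α_l)}(a) ⊗ M^{(α_r)}(a)); equivalently, every column of M^{(α)}(a) lies in the span of tensor products of columns of M^{(α_l)}(a) with columns of M^{(α_r)}(a). -/
import Mathlib


/-- The matricization `M^{(β)}(a)` of a tensor `a ∈ ℝ^{N₁×⋯×N_d}` with respect to an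
index subset `β`: rows are indexed by the modes in `β`, columns by the modes not
in `β`. -/
def matricization {d : ℕ} (Nn : Fin d → ℕ) (a : ((i : Fin d) → Fin (Nn i)) → ℝ)
    (β : Finset (Fin d)) :
    ((i : {i : Fin d // i ∈ β}) → Fin (Nn i.1)) →
      ((i : {i : Fin d // i ∉ β}) → Fin (Nn i.1)) → ℝ :=
  fun row col => a (fun i => if h : i ∈ β then row ⟨i, h⟩ else col ⟨i, h⟩)

/-- Nestedness property of matricizations underlying the hierarchical Tucker format:
for disjoint index sets `αl, αr` with union `α`, every column of `M^{(α)}(a)` lies in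
the span of tensor products of columns of `M^{(αl)}(a)` with columns of `M^{(αr)}(a)`. -/
theorem matricization_nestedness {d : ℕ} (Nn : Fin d → ℕ)
    (a : ((i : Fin d) → Fin (Nn i)) → ℝ)
    (αl αr : Finset (Fin d)) (hdisj : Disjoint αl αr)
    (c : (i : {i : Fin d // i ∉ αl ∪ αr}) → Fin (Nn i.1)) :
    (fun row : (i : {i : Fin d // i ∈ αl ∪ αr}) → Fin (Nn i.1) =>
        matricization Nn a (αl ∪ αr) row c) ∈
      Submodule.span ℝ
        { g : ((i : {i : Fin d // i ∈ αl ∪ αr}) → Fin (Nn i.1)) → ℝ |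
          ∃ (cl : (i : {i : Fin d // i ∉ αl}) → Fin (Nn i.1))
            (cr : (i : {i : Fin d // i ∉ αr}) → Fin (Nn i.1)),
            g = fun row =>
              matricization Nn a αl
                (fun i => row ⟨i.1, Finset.mem_union_left _ i.2⟩) cl *
              matricization Nn a αr
                (fun i => row ⟨i.1, Finset.mem_union_right _ i.2⟩) cr } := by
  classical
  set S := { g : ((i : {i : Fin d // i ∈ αl ∪ αr}) → Fin (Nn i.1)) → ℝ |
          ∃ (cl : (i : {i : Fin d // i ∉ αl}) → Fin (Nn i.1))
            (cr : (i : {i : Fin d // i ∉ αr}) → Fin (Nn i.1)),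
            g = fun row =>
              matricization Nn a αl
                (fun i => row ⟨i.1, Finset.mem_union_left _ i.2⟩) cl *
              matricization Nn a αr
                (fun i => row ⟨i.1, Finset.mem_union_right _ i.2⟩) cr } with hS
  -- index types
  let Il := (i : {i : Fin d // i ∈ αl}) → Fin (Nn i.1)
  let Jr := (i : {i : Fin d // i ∈ αr}) → Fin (Nn i.1)
  -- the two-variable slice function
  let F : Il → Jr → ℝ := fun i0 j =>
    a (fun i => if hl : i ∈ αl then i0 ⟨i, hl⟩ else if hr : i ∈ αr then j ⟨i, hr⟩
        else c ⟨i, by simp [Finset.mem_union, hl, hr]⟩)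
  -- completion data for generator columns
  let CL : Jr → ((i : {i : Fin d // i ∉ αl}) → Fin (Nn i.1)) := fun j i =>
    if hr : i.1 ∈ αr then j ⟨i.1, hr⟩ else c ⟨i.1, by simp [Finset.mem_union, i.2, hr]⟩
  let CR : Il → ((i : {i : Fin d // i ∉ αr}) → Fin (Nn i.1)) := fun i0 i =>
    if hl : i.1 ∈ αl then i0 ⟨i.1, hl⟩ else c ⟨i.1, by simp [Finset.mem_union, i.2, hl]⟩
  have hdisj' : ∀ {i : Fin d}, i ∈ αl → i ∉ αr := fun h => Finset.disjoint_left.mp hdisj h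
  -- key identities
  have key : ∀ row : (i : {i : Fin d // i ∈ αl ∪ αr}) → Fin (Nn i.1),
      matricization Nn a (αl ∪ αr) row c =
        F (fun i => row ⟨i.1, Finset.mem_union_left _ i.2⟩)
          (fun i => row ⟨i.1, Finset.mem_union_right _ i.2⟩) := by
    intro row
    show a _ = a _
    refine congrArg a (funext fun i => ?_)
    by_cases hl : i ∈ αl <;> by_cases hr : i ∈ αr <;>
      simp [Finset.mem_union, hl, hr]
  have idl : ∀ (j : Jr) (rowl : Il), matricization Nn a αl rowl (CL j) = F rowl j := by
    intro j rowl
    show a _ = a _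
    refine congrArg a (funext fun i => ?_)
    by_cases hl : i ∈ αl <;> by_cases hr : i ∈ αr <;> simp [CL, hl, hr]
  have idr : ∀ (i0 : Il) (rowr : Jr), matricization Nn a αr rowr (CR i0) = F i0 rowr := by
    intro i0 rowr
    show a _ = a _
    refine congrArg a (funext fun i => ?_)
    by_cases hl : i ∈ αl
    · have hr : i ∉ αr := hdisj' hl
      simp [CR, hl, hr]
    · by_cases hr : i ∈ αr <;> simp [CR, hl, hr]
  -- the span of the rows of F
  let V : Submodule ℝ (Jr → ℝ) := Submodule.span ℝ (Set.range F)
  obtain ⟨W, hW⟩ := Submodule.exists_isCompl V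
  let π : (Jr → ℝ) →ₗ[ℝ] (Jr → ℝ) := V.subtype ∘ₗ (V.linearProjOfIsCompl W hW)
  have hπV : ∀ v, π v ∈ V := fun v => (V.linearProjOfIsCompl W hW v).2
  have hπ : ∀ v ∈ V, π v = v := by
    intro v hv
    exact congrArg V.subtype (Submodule.linearProjOfIsCompl_apply_left hW ⟨v, hv⟩)
  have hrowV : ∀ i0 : Il, F i0 ∈ V := fun i0 => Submodule.subset_span ⟨i0, rfl⟩
  -- delta functions
  let E : Jr → (Jr → ℝ) := fun j j' => if j' = j then 1 else 0
  have hE : ∀ v : Jr → ℝ, v = ∑ j : Jr, v j • E j := by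
    intro v
    funext j'
    simp only [Finset.sum_apply, Pi.smul_apply, smul_eq_mul, E, mul_ite, mul_one, mul_zero]
    rw [Finset.sum_ite_eq Finset.univ j' v]
    simp
  -- expansion of each row through the projection
  have expand : ∀ i0 : Il, F i0 = ∑ j : Jr, F i0 j • π (E j) := by
    intro i0
    conv_lhs => rw [← hπ _ (hrowV i0), hE (F i0)]
    rw [map_sum]
    exact Finset.sum_congr rfl fun j _ => by rw [map_smul]
  -- each term lies in the span
  have term : ∀ (j : Jr) (w : Jr → ℝ), w ∈ V →
      (fun row : (i : {i : Fin d // i ∈ αl ∪ αr}) → Fin (Nn i.1) =>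
        F (fun i => row ⟨i.1, Finset.mem_union_left _ i.2⟩) j *
          w (fun i => row ⟨i.1, Finset.mem_union_right _ i.2⟩)) ∈ Submodule.span ℝ S := by
    intro j w hw
    induction hw using Submodule.span_induction with
    | mem x hx =>
      obtain ⟨i0, rfl⟩ := hx
      apply Submodule.subset_span
      refine ⟨CL j, CR i0, ?_⟩
      funext row
      rw [idl, idr]
    | zero =>
      have h0 : (fun row : (i : {i : Fin d // i ∈ αl ∪ αr}) → Fin (Nn i.1) =>
          F (fun i => row ⟨i.1, Finset.mem_union_left _ i.2⟩) j *
            (0 : Jr → ℝ) (fun i => row ⟨i.1, Finset.mem_union_right _ i.2⟩)) = 0 := by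
        funext row; simp
      rw [h0]; exact Submodule.zero_mem _
    | add x y _ _ hx hy =>
      have h1 : (fun row : (i : {i : Fin d // i ∈ αl ∪ αr}) → Fin (Nn i.1) =>
          F (fun i => row ⟨i.1, Finset.mem_union_left _ i.2⟩) j *
            (x + y) (fun i => row ⟨i.1, Finset.mem_union_right _ i.2⟩)) =
          (fun row => F (fun i => row ⟨i.1, Finset.mem_union_left _ i.2⟩) j *
            x (fun i => row ⟨i.1, Finset.mem_union_right _ i.2⟩)) +
          (fun row => F (fun i => row ⟨i.1, Finset.mem_union_left _ i.2⟩) j *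
            y (fun i => row ⟨i.1, Finset.mem_union_right _ i.2⟩)) := by
        funext row; simp [mul_add]
      rw [h1]; exact Submodule.add_mem _ hx hy
    | smul r x _ hx =>
      have h1 : (fun row : (i : {i : Fin d // i ∈ αl ∪ αr}) → Fin (Nn i.1) =>
          F (fun i => row ⟨i.1, Finset.mem_union_left _ i.2⟩) j *
            (r • x) (fun i => row ⟨i.1, Finset.mem_union_right _ i.2⟩)) =
          r • (fun row => F (fun i => row ⟨i.1, Finset.mem_union_left _ i.2⟩) j *
            x (fun i => row ⟨i.1, Finset.mem_union_right _ i.2⟩)) := by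
        funext row; simp only [Pi.smul_apply, smul_eq_mul]; ring
      rw [h1]; exact Submodule.smul_mem _ r hx
  -- conclude
  have main : (fun row : (i : {i : Fin d // i ∈ αl ∪ αr}) → Fin (Nn i.1) =>
      matricization Nn a (αl ∪ αr) row c) =
      ∑ j : Jr, (fun row => F (fun i => row ⟨i.1, Finset.mem_union_left _ i.2⟩) j *
        (π (E j)) (fun i => row ⟨i.1, Finset.mem_union_right _ i.2⟩)) := by
    funext row
    have h2 := congrFun (expand (fun i => row ⟨i.1, Finset.mem_union_left _ i.2⟩))
      (fun i => row ⟨i.1, Finset.mem_union_right _ i.2⟩)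
    rw [key row, h2]
    simp [Finset.sum_apply, smul_eq_mul]
  rw [main]
  exact Submodule.sum_mem _ fun j _ => term j _ (hπV _)
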